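/- arXiv:1408.3353 — 2 statements merged into one kernel-verified Lean document; each statement's English description precedes it below -/
import Mathlib

section
/- Let A be a complete discrete valuation ring whose residue field k is perfect of characteristic p and whose fraction field has characteristic 0, and suppose the characteristic polynomial of an automorphism γ of a finite free A-module M splits over A with all roots being roots of unity of order prime to p. Then M admits a γ-stable filtration 0 = F^0 ⊆ F^1 ⊆ ... ⊆ F^s = M with each F^e/F^{e-1} free of rank one over A. -/
open Polynomial

private lemma aux_exists_eigen {A M : Type*} [CommRing A] [AddCommGroup M] [Module A M]
    [Nontrivial M] (f : M →ₗ[A] M) (r : Multiset A)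
    (h : Polynomial.aeval f (r.map (fun a => X - C a)).prod = 0) :
    ∃ a ∈ r, ∃ v : M, v ≠ 0 ∧ f v = a • v := by
  induction r using Multiset.induction with
  | empty =>
    simp only [Multiset.map_zero, Multiset.prod_zero, map_one] at h
    obtain ⟨x, hx⟩ := exists_ne (0 : M)
    exact absurd (congrArg (fun g : M →ₗ[A] M => g x) h) (by simpa using hx)
  | cons a s ih =>
    rw [Multiset.map_cons, Multiset.prod_cons, map_mul] at h
    by_cases hs : Polynomial.aeval f (s.map (fun a => X - C a)).prod = 0
    · obtain ⟨b, hb, v, hv, hfv⟩ := ih hs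
      exact ⟨b, Multiset.mem_cons_of_mem hb, v, hv, hfv⟩
    · obtain ⟨x, hx⟩ : ∃ x, Polynomial.aeval f (s.map (fun a => X - C a)).prod x ≠ 0 := by
        by_contra hc
        push_neg at hc
        exact hs (LinearMap.ext hc)
      refine ⟨a, Multiset.mem_cons_self a s, _, hx, ?_⟩
      have := congrArg (fun g : M →ₗ[A] M => g x) h
      simp only [Module.End.mul_apply, map_sub, aeval_X, aeval_C, LinearMap.zero_apply,
        LinearMap.sub_apply, Module.algebraMap_end_apply] at this ⊢
      exact sub_eq_zero.mp this

private lemma aux_aeval_descend {A M N : Type*} [CommRing A] [AddCommGroup M] [Module A M]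
    [AddCommGroup N] [Module A N] (f : M →ₗ[A] M) (g : M →ₗ[A] N) (f₂ : N →ₗ[A] N)
    (hg : Function.Surjective g) (hcomm : ∀ x, g (f x) = f₂ (g x)) (P : A[X])
    (hP : Polynomial.aeval f P = 0) : Polynomial.aeval f₂ P = 0 := by
  have hpow : ∀ (n : ℕ) (x : M), (f₂ ^ n) (g x) = g ((f ^ n) x) := by
    intro n
    induction n with
    | zero => simp
    | succ n ih =>
      intro x
      rw [pow_succ', pow_succ', Module.End.mul_apply, Module.End.mul_apply, hcomm, ih]
  have key : ∀ (Q : A[X]) (x : M),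
      (Polynomial.aeval f₂ Q) (g x) = g ((Polynomial.aeval f Q) x) := by
    intro Q
    induction Q using Polynomial.induction_on' with
    | add p q hp hq => intro x; simp [hp, hq]
    | monomial n a =>
      intro x
      simp only [aeval_monomial, Module.algebraMap_end_eq_smul_id, Module.End.mul_apply,
        LinearMap.smul_apply, LinearMap.id_apply, map_smul]
      rw [hpow]
  ext y
  obtain ⟨x, rfl⟩ := hg y
  rw [key, hP]
  simp

private lemma aux_primitive {A : Type*} [CommRing A] [IsDomain A] [IsLocalRing A]
    [IsPrincipalIdealRing A]
    {M : Type*} [AddCommGroup M] [Module A M] {ι : Type*} [Fintype ι] (b : Module.Basis ι A M)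
    (f : M →ₗ[A] M) (a : A) (v : M) (hv0 : v ≠ 0) (hγv : f v = a • v) :
    ∃ w : M, w ≠ 0 ∧ f w = a • w ∧ ∃ i0 : ι, IsUnit (b.repr w i0) := by
  set c : ι → A := fun i => b.repr v i with hc
  obtain ⟨g, hgI⟩ := IsPrincipalIdealRing.principal (Ideal.span (Set.range c))
  have hdvd : ∀ i, g ∣ c i := by
    intro i
    have : c i ∈ Ideal.span (Set.range c) := Ideal.subset_span ⟨i, rfl⟩
    rw [hgI] at this
    exact Ideal.mem_span_singleton.mp this
  choose u hu using hdvd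
  have hg0 : g ≠ 0 := by
    rintro rfl
    apply hv0
    have : ∀ i, b.repr v i = 0 := fun i => by simpa using hu i
    have hre : b.repr v = 0 := Finsupp.ext this
    simpa using congrArg b.repr.symm hre
  set w : M := ∑ i, u i • b i with hw
  have hgw : g • w = v := by
    rw [hw, Finset.smul_sum]
    conv_rhs => rw [← b.sum_repr v]
    refine Finset.sum_congr rfl fun i _ => ?_
    rw [smul_smul, ← hu i]
  have hwrepr : ∀ j, b.repr w j = u j := by
    intro j
    classical
    rw [hw]
    simp only [map_sum, map_smul, Module.Basis.repr_self, Finsupp.smul_single, smul_eq_mul, mul_one,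
      Finsupp.finset_sum_apply, Finsupp.single_apply]
    rw [Finset.sum_ite_eq']
    simp
  have hw0 : w ≠ 0 := by
    intro hwz
    apply hv0
    rw [← hgw, hwz, smul_zero]
  have hγw : f w = a • w := by
    have hinj : Function.Injective (fun x : M => g • x) := by
      intro x y hxy
      have h3 : ∀ j, g * b.repr x j = g * b.repr y j := by
        intro j
        have := congrArg (fun z => b.repr z j) hxy
        simpa [map_smul] using this
      have h4 : ∀ j, b.repr x j = b.repr y j := fun j => mul_left_cancel₀ hg0 (h3 j)
      have hre : b.repr x = b.repr y := Finsupp.ext h4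
      simpa using congrArg b.repr.symm hre
    apply hinj
    show g • f w = g • (a • w)
    rw [← map_smul, hgw, hγv, ← hgw, smul_comm]
  refine ⟨w, hw0, hγw, ?_⟩
  by_contra hc2
  push_neg at hc2
  have hmem : ∀ i, u i ∈ IsLocalRing.maximalIdeal A := by
    intro i
    have := hc2 i
    rw [hwrepr i] at this
    exact this
  have hgmem : g ∈ Ideal.span (Set.range c) := by
    rw [hgI]; exact Ideal.mem_span_singleton_self g
  obtain ⟨t, ht⟩ := (Submodule.mem_span_range_iff_exists_fun A).mp hgmem
  have hone : (∑ i, t i * u i) = 1 := by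
    have h2 : g * (∑ i, t i * u i) = g := by
      rw [Finset.mul_sum]
      calc ∑ i, g * (t i * u i) = ∑ i, t i • c i :=
            Finset.sum_congr rfl fun i _ => by rw [smul_eq_mul, hu i]; ring
        _ = g := ht
    exact mul_left_cancel₀ hg0 (by rw [h2, mul_one])
  have : (1 : A) ∈ IsLocalRing.maximalIdeal A := by
    rw [← hone]
    exact Ideal.sum_mem _ fun i _ => Ideal.mul_mem_left _ _ (hmem i)
  exact (IsLocalRing.maximalIdeal.isMaximal A).ne_top
    (Ideal.eq_top_of_isUnit_mem _ this isUnit_one)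

universe u v

private lemma aux_main (A : Type u) [CommRing A] [IsDomain A] [IsDiscreteValuationRing A] (n : ℕ) :
    ∀ (M : Type v) [AddCommGroup M] [Module A M] [Module.Finite A M] [Module.Free A M]
      (γ : M ≃ₗ[A] M) (r : Multiset A), Module.finrank A M = n → (∀ a ∈ r, IsUnit a) →
      Polynomial.aeval γ.toLinearMap ((r.map fun a => X - C a)).prod = 0 →
      ∃ F : ℕ → Submodule A M, F 0 = ⊥ ∧ F n = ⊤ ∧ Monotone F ∧
        (∀ e, Submodule.map γ.toLinearMap (F e) = F e) ∧
        ∀ e, e < n → Module.Free A (↥(F (e+1)) ⧸ Submodule.comap (F (e+1)).subtype (F e)) ∧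
          Module.rank A (↥(F (e+1)) ⧸ Submodule.comap (F (e+1)).subtype (F e)) = 1 := by
  induction n with
  | zero =>
    intro M _ _ _ _ γ r hrank _ _
    have hsing : Subsingleton M := by
      have b := Module.Free.chooseBasis A M
      have hcard : Fintype.card (Module.Free.ChooseBasisIndex A M) = 0 := by
        rw [← Module.finrank_eq_card_chooseBasisIndex, hrank]
      have hempty : IsEmpty (Module.Free.ChooseBasisIndex A M) :=
        Fintype.card_eq_zero_iff.mp hcard
      refine subsingleton_of_forall_eq 0 fun m => ?_
      have := b.sum_repr m
      rw [Finset.univ_eq_empty, Finset.sum_empty] at this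
      exact this.symm
    have hbt : (⊥ : Submodule A M) = ⊤ := by
      ext x
      simp [Subsingleton.elim x 0]
    exact ⟨fun _ => ⊥, rfl, hbt, monotone_const, fun e => Submodule.map_bot _,
      fun e he => absurd he (Nat.not_lt_zero e)⟩
  | succ n ih =>
    intro M _ _ _ _ γ r hrank hunits hann
    haveI : Nontrivial M := by
      rw [← Module.finrank_pos_iff (R := A)]
      omega
    obtain ⟨a, har, v, hv0, hγv⟩ := aux_exists_eigen γ.toLinearMap r hann
    obtain ⟨w, hw0, hγw, i0, hunit⟩ :=
      aux_primitive (Module.Free.chooseBasis A M) γ.toLinearMap a v hv0 hγv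
    have ha : IsUnit a := hunits a har
    set b := Module.Free.chooseBasis A M with hb
    set N : Submodule A M := Submodule.span A {w} with hN
    have hNstab : N.map γ.toLinearMap = N := by
      rw [hN, Submodule.map_span, Set.image_singleton, hγw,
        Submodule.span_singleton_smul_eq ha]
    haveI hQtf : NoZeroSMulDivisors A (M ⧸ N) := by
      constructor
      intro c q hcq
      rcases eq_or_ne c 0 with rfl | hc
      · exact Or.inl rfl
      right
      obtain ⟨x, rfl⟩ := N.mkQ_surjective q
      rw [← map_smul, Submodule.mkQ_apply, Submodule.Quotient.mk_eq_zero] at hcq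
      obtain ⟨t, ht⟩ := Submodule.mem_span_singleton.mp hcq
      obtain ⟨U, hU⟩ := hunit
      have hco : t * b.repr w i0 = c * b.repr x i0 := by
        have := congrArg (fun z => b.repr z i0) ht
        simpa [map_smul] using this
      set s : A := b.repr x i0 * (↑U⁻¹ : Aˣ) with hs
      have hts : t = c * s := by
        have h5 : t * (b.repr w i0 * ↑U⁻¹) = c * s := by
          rw [← mul_assoc, hco, hs]; ring
        rwa [← hU, Units.mul_inv, mul_one] at h5
      have hx : x = s • w := by
        have h2 : c • x = c • (s • w) := by
          rw [← ht, hts, mul_smul]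
        exact smul_right_injective M hc h2
      rw [Submodule.mkQ_apply, Submodule.Quotient.mk_eq_zero, hx]
      exact Submodule.smul_mem _ _ (Submodule.mem_span_singleton_self w)
    haveI : Module.Free A (M ⧸ N) := Module.free_of_finite_type_torsion_free'
    have hinj : Function.Injective (LinearMap.toSpanSingleton A M w) := by
      intro c d hcd
      have h0 : (c - d) • w = 0 := by
        simp only [LinearMap.toSpanSingleton_apply] at hcd
        rw [sub_smul, hcd, sub_self]
      rcases smul_eq_zero.mp h0 with h | h
      · exact sub_eq_zero.mp h
      · exact absurd h hw0
    have e1 : A ≃ₗ[A] ↥(LinearMap.range (LinearMap.toSpanSingleton A M w)) :=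
      LinearEquiv.ofInjective (LinearMap.toSpanSingleton A M w) hinj
    have hNr : N = LinearMap.range (LinearMap.toSpanSingleton A M w) :=
      LinearMap.span_singleton_eq_range A M w
    have eNA : A ≃ₗ[A] ↥N := e1.trans (LinearEquiv.ofEq _ _ hNr.symm)
    haveI hNfree : Module.Free A ↥N := Module.Free.of_equiv eNA
    have hrkN : Module.rank A N = 1 := by
      rw [hNr]
      have h := e1.lift_rank_eq
      rw [Module.rank_self, Cardinal.lift_one] at h
      exact Cardinal.lift_eq_one.mp h.symm
    have hrkQ : Module.finrank A (M ⧸ N) = n := by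
      have h1 : Module.rank A (M ⧸ N) + Module.rank A N = Module.rank A M :=
        Submodule.rank_quotient_add_rank N
      rw [hrkN, ← Module.finrank_eq_rank, ← Module.finrank_eq_rank, hrank] at h1
      have h2 : Module.finrank A (M ⧸ N) + 1 = n + 1 := by exact_mod_cast h1
      omega
    -- the induced automorphism on the quotient
    set γQ : (M ⧸ N) ≃ₗ[A] (M ⧸ N) := Submodule.Quotient.equiv N N γ hNstab with hγQ
    have hcommQ : ∀ x : M, N.mkQ (γ.toLinearMap x) = γQ.toLinearMap (N.mkQ x) := by
      intro x
      simp [hγQ, Submodule.Quotient.equiv, Submodule.mapQ_apply]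
    have hannQ : Polynomial.aeval γQ.toLinearMap ((r.map fun a => X - C a)).prod = 0 :=
      aux_aeval_descend γ.toLinearMap N.mkQ γQ.toLinearMap N.mkQ_surjective hcommQ _ hann
    obtain ⟨G, hG0, hGn, hGmono, hGstab, hGquot⟩ :=
      ih (M ⧸ N) γQ r hrkQ hunits hannQ
    -- assemble the filtration on M
    refine ⟨fun e => Nat.casesOn e ⊥ (fun e' => Submodule.comap N.mkQ (G e')), rfl, ?_, ?_, ?_, ?_⟩
    · show Submodule.comap N.mkQ (G n) = ⊤
      rw [hGn, Submodule.comap_top]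
    · apply monotone_nat_of_le_succ
      intro e
      cases e with
      | zero => exact bot_le
      | succ e => exact Submodule.comap_mono (hGmono (Nat.le_succ e))
    · intro e
      cases e with
      | zero => exact Submodule.map_bot _
      | succ e =>
        show Submodule.map γ.toLinearMap (Submodule.comap N.mkQ (G e))
          = Submodule.comap N.mkQ (G e)
        have hc : N.mkQ.comp γ.symm.toLinearMap = γQ.symm.toLinearMap.comp N.mkQ := by
          ext x
          apply γQ.injective
          show γQ (N.mkQ (γ.symm x)) = γQ (γQ.symm (N.mkQ x))
          rw [LinearEquiv.apply_symm_apply]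
          have := hcommQ (γ.symm x)
          simp only [LinearEquiv.coe_coe] at this ⊢
          rw [← this, LinearEquiv.apply_symm_apply]
        rw [Submodule.map_equiv_eq_comap_symm, ← Submodule.comap_comp, hc,
          Submodule.comap_comp]
        congr 1
        rw [Submodule.comap_equiv_eq_map_symm, LinearEquiv.symm_symm]
        exact hGstab e
    · intro e he
      cases e with
      | zero =>
        show Module.Free A (↥(Submodule.comap N.mkQ (G 0)) ⧸
            Submodule.comap (Submodule.comap N.mkQ (G 0)).subtype (⊥ : Submodule A M)) ∧
          Module.rank A (↥(Submodule.comap N.mkQ (G 0)) ⧸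
            Submodule.comap (Submodule.comap N.mkQ (G 0)).subtype (⊥ : Submodule A M)) = 1
        have hF1 : Submodule.comap N.mkQ (G 0) = N := by
          rw [hG0, Submodule.comap_bot, Submodule.ker_mkQ]
        have hbot : (Submodule.comap (Submodule.comap N.mkQ (G 0)).subtype
            (⊥ : Submodule A M)) = ⊥ := by
          rw [Submodule.comap_bot, Submodule.ker_subtype]
        have E1 := Submodule.quotEquivOfEqBot _ hbot
        have E2 : ↥(Submodule.comap N.mkQ (G 0)) ≃ₗ[A] ↥N := LinearEquiv.ofEq _ _ hF1
        have E := E1.trans E2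
        constructor
        · exact Module.Free.of_equiv E.symm
        · rw [E.rank_eq]
          exact hrkN
      | succ e =>
        have he' : e < n := by omega
        obtain ⟨hfree, hrk1⟩ := hGquot e he'
        show Module.Free A (↥(Submodule.comap N.mkQ (G (e+1))) ⧸
            Submodule.comap (Submodule.comap N.mkQ (G (e+1))).subtype
              (Submodule.comap N.mkQ (G e))) ∧
          Module.rank A (↥(Submodule.comap N.mkQ (G (e+1))) ⧸
            Submodule.comap (Submodule.comap N.mkQ (G (e+1))).subtype
              (Submodule.comap N.mkQ (G e))) = 1
        set F2 : Submodule A M := Submodule.comap N.mkQ (G (e+1)) with hF2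
        set F1' : Submodule A M := Submodule.comap N.mkQ (G e) with hF1'
        set φ1 : ↥F2 →ₗ[A] ↥(G (e+1)) :=
          LinearMap.codRestrict (G (e+1)) (N.mkQ.comp F2.subtype) (fun c => c.2) with hφ1
        set ψ : ↥F2 →ₗ[A]
            (↥(G (e+1)) ⧸ Submodule.comap (G (e+1)).subtype (G e)) :=
          (Submodule.comap (G (e+1)).subtype (G e)).mkQ.comp φ1 with hψ
        have hψsurj : Function.Surjective ψ := by
          intro y
          obtain ⟨z, rfl⟩ := (Submodule.comap (G (e+1)).subtype (G e)).mkQ_surjective y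
          obtain ⟨x, hx⟩ := N.mkQ_surjective z.1
          have hxF2 : x ∈ F2 := by
            show N.mkQ x ∈ G (e+1)
            rw [hx]; exact z.2
          refine ⟨⟨x, hxF2⟩, ?_⟩
          show (Submodule.comap (G (e+1)).subtype (G e)).mkQ (φ1 ⟨x, hxF2⟩) = _
          congr 1
          exact Subtype.ext hx
        have hψker : LinearMap.ker ψ = Submodule.comap F2.subtype F1' := by
          ext x
          rw [LinearMap.mem_ker, hψ, LinearMap.comp_apply, Submodule.mkQ_apply,
            Submodule.Quotient.mk_eq_zero]
          rfl
        have E := LinearMap.quotKerEquivOfSurjective ψ hψsurj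
        rw [show Submodule.comap F2.subtype F1' = LinearMap.ker ψ from hψker.symm]
        constructor
        · exact Module.Free.of_equiv E.symm
        · rw [E.rank_eq]
          exact hrk1

/-- Over a complete DVR `A` (perfect residue field of characteristic `p`, fraction field of
characteristic `0`), if the characteristic polynomial of an automorphism `γ` of a finite free
`A`-module `M` splits over `A` with all roots being roots of unity of order prime to `p`,
then `M` admits a `γ`-stable filtration `0 = F⁰ ⊆ F¹ ⊆ ... ⊆ Fˢ = M` with all successive
quotients free of rank one. -/
theorem stmt_10 (p : ℕ) [Fact p.Prime]
    (A : Type*) [CommRing A] [IsDomain A] [IsDiscreteValuationRing A]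
    [IsAdicComplete (IsLocalRing.maximalIdeal A) A]
    [CharP (IsLocalRing.ResidueField A) p]
    [PerfectRing (IsLocalRing.ResidueField A) p]
    (K : Type*) [Field K] [Algebra A K] [IsFractionRing A K] [CharZero K]
    (M : Type*) [AddCommGroup M] [Module A M] [Module.Finite A M] [Module.Free A M]
    (γ : M ≃ₗ[A] M)
    (hsplit : ∃ r : Multiset A,
      γ.toLinearMap.charpoly = (r.map (fun a => Polynomial.X - Polynomial.C a)).prod ∧
      ∀ a ∈ r, ∃ n : ℕ, 0 < n ∧ ¬ p ∣ n ∧ a ^ n = 1) :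
    ∃ F : ℕ → Submodule A M,
      F 0 = ⊥ ∧ F (Module.finrank A M) = ⊤ ∧ Monotone F ∧
      (∀ e, Submodule.map γ.toLinearMap (F e) = F e) ∧
      ∀ e, e < Module.finrank A M →
        Module.Free A (↥(F (e + 1)) ⧸ Submodule.comap (F (e + 1)).subtype (F e)) ∧
        Module.rank A (↥(F (e + 1)) ⧸ Submodule.comap (F (e + 1)).subtype (F e)) = 1 := by
  obtain ⟨r, hchar, hroots⟩ := hsplit
  have hunits : ∀ a ∈ r, IsUnit a := by
    intro a har
    obtain ⟨m, hm, _, hpow⟩ := hroots a har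
    exact IsUnit.of_pow_eq_one hpow (by omega)
  have hann : Polynomial.aeval γ.toLinearMap
      ((r.map fun a => Polynomial.X - Polynomial.C a)).prod = 0 := by
    rw [← hchar]
    exact LinearMap.aeval_self_charpoly _
  exact aux_main A (Module.finrank A M) M γ r rfl hunits hann
end

section
/- Let A be a discrete valuation ring with maximal ideal 𝔪 and residue field k, M a finite free A-module, γ an automorphism of M, and 0 = F^0 ⊆ ... ⊆ F^s = M a γ-stable filtration with each G^e = F^e/F^{e-1} free of rank 1. Suppose d : L → M is an A-linear map from a finite free A-module L with im(d) ⊆ 𝔪M, and suppose ξ_e ∈ A^× are units such that γ acts on the cyclic module F^e/((F^e ∩ im(d)) + F^{e-1}) by multiplication by (the image of) ξ_e. Then there is an A-linear map t : M → L such that the map γ' = γ + d ∘ t satisfies: γ' preserves the filtration F^• and acts on each G^e by multiplication by ξ_e. -/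
/-- Homotopy-modification step: over a DVR `A`, given an automorphism `γ` of a finite free
module `M` preserving a filtration `0 = F⁰ ⊆ ... ⊆ Fˢ = M` with rank-one free quotients,
a map `d : L → M` with image in `𝔪M`, and units `ξ_e` such that `γ` acts on each cyclic
module `F^{e+1}/((F^{e+1} ∩ im d) + F^e)` by multiplication by `ξ_e`, there is an `A`-linear
`t : M → L` such that `γ' = γ + d ∘ t` preserves the filtration and acts on each quotient
`F^{e+1}/F^e` by multiplication by `ξ_e`. -/
theorem stmt_18 (A : Type*) [CommRing A] [IsDomain A] [IsDiscreteValuationRing A]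
    (M L : Type*) [AddCommGroup M] [Module A M] [Module.Finite A M] [Module.Free A M]
    [AddCommGroup L] [Module A L] [Module.Finite A L] [Module.Free A L]
    (γ : M ≃ₗ[A] M) (s : ℕ) (F : ℕ → Submodule A M)
    (hF0 : F 0 = ⊥) (hFs : F s = ⊤) (hmono : Monotone F)
    (hstab : ∀ e, Submodule.map γ.toLinearMap (F e) = F e)
    (hrk : ∀ e, e < s →
      Module.Free A (↥(F (e + 1)) ⧸ Submodule.comap (F (e + 1)).subtype (F e)) ∧
      Module.rank A (↥(F (e + 1)) ⧸ Submodule.comap (F (e + 1)).subtype (F e)) = 1)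
    (d : L →ₗ[A] M)
    (hd : LinearMap.range d ≤ (IsLocalRing.maximalIdeal A) • (⊤ : Submodule A M))
    (ξ : ℕ → A) (hξ : ∀ e, IsUnit (ξ e))
    (hact : ∀ e, e < s → ∀ x ∈ F (e + 1),
      γ x - ξ e • x ∈ (F (e + 1) ⊓ LinearMap.range d) ⊔ F e) :
    ∃ t : M →ₗ[A] L,
      (∀ e, ∀ x ∈ F e, (γ.toLinearMap + d ∘ₗ t) x ∈ F e) ∧
      (∀ e, e < s → ∀ x ∈ F (e + 1), (γ.toLinearMap + d ∘ₗ t) x - ξ e • x ∈ F e) := by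
  classical
  -- Step 1: generators adapted to the filtration
  have key : ∀ e : Fin s, ∃ ℓ : M, ℓ ∈ F (e.1 + 1) ∧
      (∀ x ∈ F (e.1 + 1), ∃ a : A, x - a • ℓ ∈ F e.1) ∧
      (∀ a : A, a • ℓ ∈ F e.1 → a = 0) := by
    intro e
    obtain ⟨hfree, hrank⟩ := hrk e.1 e.2
    set N := Submodule.comap (F (e.1 + 1)).subtype (F e.1) with hN
    letI : Module.Free A (↥(F (e.1 + 1)) ⧸ N) := hfree
    let b := Module.Free.chooseBasis A (↥(F (e.1 + 1)) ⧸ N)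
    have hcard : Cardinal.mk (Module.Free.ChooseBasisIndex A (↥(F (e.1 + 1)) ⧸ N)) = 1 := by
      rw [← Module.Free.rank_eq_card_chooseBasisIndex, hrank]
    obtain ⟨hsub, hne⟩ := Cardinal.eq_one_iff_unique.mp hcard
    haveI : Unique (Module.Free.ChooseBasisIndex A (↥(F (e.1 + 1)) ⧸ N)) :=
      uniqueOfSubsingleton hne.some
    obtain ⟨y, hy⟩ := Submodule.Quotient.mk_surjective N (b default)
    refine ⟨(y : M), y.2, ?_, ?_⟩
    · intro x hx
      have hmem : (Submodule.Quotient.mk (⟨x, hx⟩ : F (e.1 + 1)) : ↥(F (e.1 + 1)) ⧸ N) ∈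
          Submodule.span A {b default} := by
        rw [← Set.range_unique (f := b), b.span_eq]; trivial
      obtain ⟨a, ha⟩ := Submodule.mem_span_singleton.mp hmem
      refine ⟨a, ?_⟩
      have : ((⟨x, hx⟩ : F (e.1 + 1)) - a • y) ∈ N := by
        rw [← Submodule.Quotient.mk_eq_zero, Submodule.Quotient.mk_sub,
          Submodule.Quotient.mk_smul, hy, ha, sub_self]
      simpa [hN] using this
    · intro a ha
      have hmem : (a • y : F (e.1 + 1)) ∈ N := by simpa [hN] using ha
      have h0 : a • b default = 0 := by
        rw [← hy, ← Submodule.Quotient.mk_smul, Submodule.Quotient.mk_eq_zero]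
        exact hmem
      have := congrArg (fun q => b.repr q default) h0
      simpa [Module.Basis.repr_self] using this
  choose ℓ hℓmem hℓgen hℓind using key
  -- Step 2: homotopy values on generators
  have hcorr : ∀ e : Fin s, ∃ w : L, d w ∈ F (e.1 + 1) ∧
      γ (ℓ e) - ξ e.1 • ℓ e - d w ∈ F e.1 := by
    intro e
    obtain ⟨u, hu, f, hf, huf⟩ := Submodule.mem_sup.mp (hact e.1 e.2 (ℓ e) (hℓmem e))
    obtain ⟨w, hw⟩ := hu.2
    exact ⟨w, hw ▸ hu.1, by rw [hw, ← huf]; simpa using hf⟩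
  choose w hwmem hwcorr using hcorr
  -- Step 3: ℓ is a basis of M
  have hv_memF : ∀ (e : Fin s) (n : ℕ), e.1 < n → ℓ e ∈ F n := fun e n hn =>
    hmono hn (hℓmem e)
  have hspan : ∀ n, n ≤ s → F n ≤ Submodule.span A (Set.range ℓ) := by
    intro n
    induction n with
    | zero => intro _; rw [hF0]; exact bot_le
    | succ m ih =>
      intro hm x hx
      obtain ⟨a, ha⟩ := hℓgen ⟨m, hm⟩ x hx
      have h1 : x - a • ℓ ⟨m, hm⟩ ∈ Submodule.span A (Set.range ℓ) :=
        ih (le_of_lt hm) ha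
      have h2 : a • ℓ ⟨m, hm⟩ ∈ Submodule.span A (Set.range ℓ) :=
        Submodule.smul_mem _ a (Submodule.subset_span ⟨⟨m, hm⟩, rfl⟩)
      simpa using Submodule.add_mem _ h1 h2
  have hindep : LinearIndependent A ℓ := by
    rw [Fintype.linearIndependent_iff]
    suffices H : ∀ n, n ≤ s → ∀ c : Fin s → A, (∀ i : Fin s, n ≤ i.1 → c i = 0) →
        ∑ i, c i • ℓ i = 0 → ∀ i, c i = 0 by
      intro c hc i
      exact H s le_rfl c (fun j hj => absurd j.2 (not_lt.mpr hj)) hc i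
    intro n
    induction n with
    | zero => intro _ c hc _ i; exact hc i (Nat.zero_le _)
    | succ m ih =>
      intro hm c hc hsum
      set j : Fin s := ⟨m, hm⟩ with hj
      have hrest : ∑ i ∈ Finset.univ.erase j, c i • ℓ i ∈ F m := by
        refine Submodule.sum_mem _ ?_
        intro i hi
        rcases lt_or_ge i.1 m with h | h
        · exact Submodule.smul_mem _ _ (hv_memF i m h)
        · rcases eq_or_lt_of_le h with h' | h'
          · exact absurd (Fin.ext h'.symm) (Finset.mem_erase.mp hi).1
          · rw [hc i h']; simp
      have hcj : c j • ℓ j ∈ F m := by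
        have hsplit : c j • ℓ j = -∑ i ∈ Finset.univ.erase j, c i • ℓ i := by
          have := Finset.add_sum_erase Finset.univ (fun i => c i • ℓ i) (Finset.mem_univ j)
          rw [hsum] at this
          linear_combination (norm := abel) this
        rw [hsplit]
        exact Submodule.neg_mem _ hrest
      have hcj0 : c j = 0 := hℓind j _ hcj
      intro i
      rcases eq_or_ne i j with rfl | hij
      · exact hcj0
      · refine ih (le_of_lt hm) c ?_ hsum i
        intro i' hi'
        rcases eq_or_lt_of_le hi' with h' | h'
        · rw [show i' = j from Fin.ext h'.symm]; exact hcj0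
        · exact hc i' h'
  have htop : ⊤ ≤ Submodule.span A (Set.range ℓ) := by
    rw [← hFs]; exact hspan s le_rfl
  let b : Module.Basis (Fin s) A M := Module.Basis.mk hindep htop
  -- Step 4: define t
  let t : M →ₗ[A] L := b.constr A fun e => -(w e)
  have ht : ∀ e : Fin s, t (ℓ e) = -(w e) := by
    intro e
    have : b e = ℓ e := Module.Basis.mk_apply hindep htop e
    rw [← this]
    exact b.constr_basis A _ e
  have hgen : ∀ e : Fin s, (γ.toLinearMap + d ∘ₗ t) (ℓ e) - ξ e.1 • ℓ e ∈ F e.1 := by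
    intro e
    have : (γ.toLinearMap + d ∘ₗ t) (ℓ e) - ξ e.1 • ℓ e
        = γ (ℓ e) - ξ e.1 • ℓ e - d (w e) := by
      simp [ht e, map_neg]
      abel
    rw [this]
    exact hwcorr e
  have main : ∀ n, ∀ x ∈ F n, (γ.toLinearMap + d ∘ₗ t) x ∈ F n := by
    intro n
    induction n with
    | zero => intro x hx; rw [hF0] at *; simp at hx; simp [hx]
    | succ m ih =>
      intro x hx
      rcases lt_or_ge m s with hm | hm
      · obtain ⟨a, ha⟩ := hℓgen ⟨m, hm⟩ x hx
        have h1 : (γ.toLinearMap + d ∘ₗ t) (x - a • ℓ ⟨m, hm⟩) ∈ F m := ih _ ha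
        have h2 : (γ.toLinearMap + d ∘ₗ t) (ℓ ⟨m, hm⟩) ∈ F (m + 1) := by
          have := hgen ⟨m, hm⟩
          have h3 : (γ.toLinearMap + d ∘ₗ t) (ℓ ⟨m, hm⟩)
              = ((γ.toLinearMap + d ∘ₗ t) (ℓ ⟨m, hm⟩) - ξ m • ℓ ⟨m, hm⟩)
                + ξ m • ℓ ⟨m, hm⟩ := by abel
          rw [h3]
          exact Submodule.add_mem _ (hmono (Nat.le_succ m) this)
            (Submodule.smul_mem _ _ (hℓmem ⟨m, hm⟩))
        have h4 : x = (x - a • ℓ ⟨m, hm⟩) + a • ℓ ⟨m, hm⟩ := by abel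
        rw [h4, map_add, map_smul]
        exact Submodule.add_mem _ (hmono (Nat.le_succ m) h1)
          (Submodule.smul_mem _ _ h2)
      · have : F (m + 1) = ⊤ := by
          apply le_antisymm le_top
          rw [← hFs]; exact hmono (le_trans hm (Nat.le_succ m))
        rw [this]; trivial
  refine ⟨t, main, ?_⟩
  intro e he x hx
  have hgenE : (γ.toLinearMap + d ∘ₗ t) (ℓ ⟨e, he⟩) - ξ e • ℓ ⟨e, he⟩ ∈ F e := hgen ⟨e, he⟩
  obtain ⟨a, ha⟩ := hℓgen ⟨e, he⟩ x hx
  have h1 : (γ.toLinearMap + d ∘ₗ t) (x - a • ℓ ⟨e, he⟩) ∈ F e := main _ _ ha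
  have h2 : ξ e • (x - a • ℓ ⟨e, he⟩) ∈ F e := Submodule.smul_mem _ _ ha
  have heq : (γ.toLinearMap + d ∘ₗ t) x - ξ e • x
      = ((γ.toLinearMap + d ∘ₗ t) (x - a • ℓ ⟨e, he⟩) - ξ e • (x - a • ℓ ⟨e, he⟩))
        + a • ((γ.toLinearMap + d ∘ₗ t) (ℓ ⟨e, he⟩) - ξ e • ℓ ⟨e, he⟩) := by
    simp only [map_sub, map_smul, smul_sub, smul_smul, mul_comm]
    module
  rw [heq]
  exact Submodule.add_mem _ (Submodule.sub_mem _ h1 h2) (Submodule.smul_mem _ _ hgenE)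
end
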